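/- For every q ⊆ ℕ, let j^q : Ω → Ω be the operation j^q(p) := q ⊸ p. Then j^q is a Lawvere–Tierney topology, j^q = j_{Med_q} (equivalently, U_{j^q} = Med_q), and for all P,Q ⊆ ℕ: P ≤_M Q if and only if j^P ≤_r j^Q. Hence Q ↦ j^Q induces an isomorphism between the Medvedev degrees and the r-degrees of the open topologies j^q. -/

import Mathlib

namespace KleeneOracle

/-- `e ∗ x`: application of the `e`-th partial computable function on ℕ. -/
def ap (e x : ℕ) : Part ℕ :=
  Nat.Partrec.Code.eval (Denumerable.ofNat Nat.Partrec.Code e) x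

/-- `e ∗ A := {e ∗ a : a ∈ A}`. -/
def apSet (e : ℕ) (A : Set ℕ) : Set ℕ := {z | ∃ a ∈ A, z ∈ ap e a}

/-- A partial multifunction on ℕ. -/
abbrev Multifun := ℕ → Part (Set ℕ)

def Transparent (U : Multifun) : Prop :=
  ∃ u : ℕ, ∀ (e x : ℕ) (A : Set ℕ), A ∈ U x → (∀ y ∈ A, (ap e y).Dom) →
    ∃ c ∈ ap u e, ∃ d ∈ ap c x, ∃ B ∈ U d, B ⊆ apSet e A

def Inflationary (U : Multifun) : Prop :=
  ∃ η : ℕ, ∀ x : ℕ, ∃ c ∈ ap η x, ∃ B ∈ U c, B ⊆ {x}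

def mcomp (g f : Multifun) : Multifun := fun x =>
  ⟨∃ A ∈ f x, ∀ y ∈ A, (g y).Dom,
   fun _ => {z | ∃ A ∈ f x, ∃ y ∈ A, ∃ B ∈ g y, z ∈ B}⟩

def Idempotent (U : Multifun) : Prop :=
  ∃ μ : ℕ, ∀ (x : ℕ) (A : Set ℕ), A ∈ mcomp U U x →
    ∃ c ∈ ap μ x, ∃ B ∈ U c, B ⊆ A

def mRed (f g : Multifun) : Prop :=
  ∃ e : ℕ, ∀ (x : ℕ) (A : Set ℕ), A ∈ f x →
    ∃ c ∈ ap e x, ∃ B ∈ g c, B ⊆ A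

def wRed (f g : Multifun) : Prop :=
  ∃ em ep : ℕ, ∀ (x : ℕ) (A : Set ℕ), A ∈ f x →
    ∃ c ∈ ap em x, ∃ B ∈ g c, ∀ y ∈ B, ∃ z ∈ ap ep (Nat.pair x y), z ∈ A

def Weih (g : Multifun) : Multifun := fun w =>
  ⟨∃ c ∈ ap w.unpair.1 w.unpair.2.unpair.2, ∃ B ∈ g c,
     ∀ y ∈ B, (ap w.unpair.2.unpair.1 (Nat.pair w.unpair.2.unpair.2 y)).Dom,
   fun _ => {z | ∃ c ∈ ap w.unpair.1 w.unpair.2.unpair.2, ∃ B ∈ g c,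
     ∃ y ∈ B, z ∈ ap w.unpair.2.unpair.1 (Nat.pair w.unpair.2.unpair.2 y)}⟩

def idsq (g : Multifun) : Multifun := fun w =>
  if w.unpair.1 = 0 then Part.some {w.unpair.2}
  else if w.unpair.1 = 1 then g w.unpair.2
  else Part.none

def pWeih (g : Multifun) : Multifun := Weih (idsq g)

def pwRed (f g : Multifun) : Prop := wRed f (idsq g)

def Med (Q : Set ℕ) : Multifun := fun e =>
  ⟨∀ a ∈ Q, (ap e a).Dom, fun _ => apSet e Q⟩

def MedRed (P Q : Set ℕ) : Prop :=
  ∃ e : ℕ, (∀ a ∈ Q, (ap e a).Dom) ∧ apSet e Q ⊆ P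

def constMF (P : Set ℕ) : Multifun := fun _ => Part.some P

def imp (p q : Set ℕ) : Set ℕ := {e | ∀ x ∈ p, ∃ z ∈ ap e x, z ∈ q}

def OpMonotone (j : Set ℕ → Set ℕ) : Prop :=
  ∃ u : ℕ, ∀ p q : Set ℕ, ∀ a ∈ imp p q, ∃ c ∈ ap u a, c ∈ imp (j p) (j q)

def OpInflationary (j : Set ℕ → Set ℕ) : Prop :=
  ∃ e : ℕ, ∀ p : Set ℕ, e ∈ imp p (j p)

def OpIdempotent (j : Set ℕ → Set ℕ) : Prop :=
  ∃ e : ℕ, ∀ p : Set ℕ, e ∈ imp (j (j p)) (j p)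

def LawvereTierney (j : Set ℕ → Set ℕ) : Prop :=
  OpMonotone j ∧ OpInflationary j ∧ OpIdempotent j

def jU (U : Multifun) (p : Set ℕ) : Set ℕ := {x | ∃ A ∈ U x, A ⊆ p}

def SingleValued (U : Multifun) : Prop := ∀ x : ℕ, ∀ A ∈ U x, ∃ y : ℕ, A = {y}

def presInter (j : Set ℕ → Set ℕ) : Prop :=
  ∀ (ι : Type) [Nonempty ι] (p : ι → Set ℕ), j (⋂ i, p i) = ⋂ i, j (p i)

def presUnion (j : Set ℕ → Set ℕ) : Prop :=
  ∀ (ι : Type) (p : ι → Set ℕ), j (⋃ i, p i) = ⋃ i, j (p i)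

def Uop (j : Set ℕ → Set ℕ) : Multifun := fun x =>
  ⟨∃ p : Set ℕ, x ∈ j p, fun _ => ⋂₀ {p : Set ℕ | x ∈ j p}⟩

def mMorphism (e : ℕ) (f g : Multifun) : Prop :=
  ∀ (x : ℕ) (A : Set ℕ), A ∈ f x → ∃ c ∈ ap e x, ∃ B ∈ g c, B ⊆ A

def rMorphism (e : ℕ) (j k : Set ℕ → Set ℕ) : Prop :=
  ∀ p : Set ℕ, e ∈ imp (j p) (k p)

def rRed (j k : Set ℕ → Set ℕ) : Prop := ∃ e : ℕ, rMorphism e j k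


/-- The open topology `j^q : p ↦ (q ⊸ p)`. -/
def jq (q : Set ℕ) : Set ℕ → Set ℕ := fun p => imp q p


section Aux
open Nat.Partrec (Code)
open Nat.Partrec.Code

private lemma ap_encode (c : Code) (x : ℕ) : ap (Encodable.encode c) x = eval c x := by
  simp [ap]

private lemma ap_partrec : Partrec₂ ap :=
  eval_part.comp ((Computable.ofNat Code).comp Computable.fst) Computable.snd

private lemma exists_curry (f : ℕ →. ℕ) (hf : Partrec f) :
    ∃ u : ℕ, ∀ a : ℕ, ∃ c ∈ ap u a, ∀ x, ap c x = f (Nat.pair a x) := by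
  obtain ⟨cf, hcf⟩ := exists_code.1 (Partrec.nat_iff.1 hf)
  have hg : Computable fun a : ℕ => Encodable.encode (curry cf a) :=
    (Primrec.encode.comp (primrec₂_curry.comp (Primrec.const cf) Primrec.id)).to_comp
  obtain ⟨cu, hcu⟩ := exists_code.1 (Partrec.nat_iff.1 hg)
  refine ⟨Encodable.encode cu, fun a => ⟨Encodable.encode (curry cf a), ?_, fun x => ?_⟩⟩
  · rw [ap_encode, hcu]; simp
  · rw [ap_encode, eval_curry, hcf]

private lemma exists_curry2 (f : ℕ →. ℕ) (hf : Partrec f) :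
    ∃ u : ℕ, ∀ a : ℕ, ∃ c ∈ ap u a, ∀ b : ℕ, ∃ d ∈ ap c b,
      ∀ x, ap d x = f (Nat.pair a (Nat.pair b x)) := by
  obtain ⟨cf, hcf⟩ := exists_code.1 (Partrec.nat_iff.1 hf)
  have hh : Computable fun w : ℕ =>
      Encodable.encode (curry (Denumerable.ofNat Code w.unpair.1) w.unpair.2) :=
    (Primrec.encode.comp (primrec₂_curry.comp
      ((Primrec.ofNat Code).comp (Primrec.fst.comp Primrec.unpair))
      (Primrec.snd.comp Primrec.unpair))).to_comp
  obtain ⟨ch, hch⟩ := exists_code.1 (Partrec.nat_iff.1 hh)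
  have hu : Computable fun a : ℕ =>
      Encodable.encode (curry ch (Encodable.encode (curry cf a))) :=
    (Primrec.encode.comp (primrec₂_curry.comp (Primrec.const ch)
      (Primrec.encode.comp (primrec₂_curry.comp (Primrec.const cf) Primrec.id)))).to_comp
  obtain ⟨cu, hcu⟩ := exists_code.1 (Partrec.nat_iff.1 hu)
  refine ⟨Encodable.encode cu, fun a =>
    ⟨Encodable.encode (curry ch (Encodable.encode (curry cf a))), ?_, fun b =>
      ⟨Encodable.encode (curry (curry cf a) b), ?_, fun x => ?_⟩⟩⟩
  · rw [ap_encode, hcu]; simp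
  · rw [ap_encode, eval_curry, hch]; simp
  · rw [ap_encode, eval_curry, eval_curry, hcf]

private lemma jq_eq_jU' (q : Set ℕ) : jq q = jU (Med q) := by
  funext p
  ext e
  simp only [jq, imp, jU, Med, Set.mem_setOf_eq]
  constructor
  · intro h
    have hdom : ∀ a ∈ q, (ap e a).Dom := fun a ha => by
      obtain ⟨z, hz, _⟩ := h a ha
      exact Part.dom_iff_mem.2 ⟨z, hz⟩
    refine ⟨apSet e q, ⟨hdom, rfl⟩, fun z hz => ?_⟩
    obtain ⟨a, ha, hza⟩ := hz
    obtain ⟨w, hw, hwp⟩ := h a ha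
    rwa [Part.mem_unique hza hw]
  · rintro ⟨A, hA, hAp⟩ x hx
    obtain ⟨hdom, rfl⟩ := Part.mem_mk_iff.1 hA
    exact ⟨(ap e x).get (hdom x hx), Part.get_mem _, hAp ⟨x, hx, Part.get_mem _⟩⟩

private lemma uop_jq' (q : Set ℕ) : Uop (jq q) = Med q := by
  funext e
  apply Part.ext'
  · constructor
    · rintro ⟨p, hp⟩ a ha
      obtain ⟨z, hz, _⟩ := hp a ha
      exact Part.dom_iff_mem.2 ⟨z, hz⟩
    · intro hdom
      exact ⟨Set.univ, fun a ha => ⟨(ap e a).get (hdom a ha), Part.get_mem _, trivial⟩⟩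
  · intro h1 h2
    apply Set.Subset.antisymm
    · intro z hz
      exact Set.mem_sInter.1 hz (apSet e q)
        (fun a ha => ⟨(ap e a).get (h2 a ha), Part.get_mem _, ⟨a, ha, Part.get_mem _⟩⟩)
    · intro z hz
      apply Set.mem_sInter.2
      intro p hp
      obtain ⟨a, ha, hza⟩ := hz
      obtain ⟨w, hw, hwp⟩ := hp a ha
      rwa [Part.mem_unique hza hw]

private lemma lt_jq' (q : Set ℕ) : LawvereTierney (jq q) := by
  refine ⟨?_, ?_, ?_⟩
  · -- monotone
    obtain ⟨u, hu⟩ := exists_curry2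
      (fun n => (ap n.unpair.2.unpair.1 n.unpair.2.unpair.2).bind fun w => ap n.unpair.1 w)
      ((ap_partrec.comp
          (Computable.fst.comp (Computable.unpair.comp (Computable.snd.comp Computable.unpair)))
          (Computable.snd.comp (Computable.unpair.comp (Computable.snd.comp Computable.unpair)))).bind
        (ap_partrec.comp
          (Computable.fst.comp (Computable.unpair.comp Computable.fst)) Computable.snd))
    refine ⟨u, fun p p' a ha => ?_⟩
    obtain ⟨c, hc, h2⟩ := hu a
    refine ⟨c, hc, fun e he => ?_⟩
    obtain ⟨d, hd, h3⟩ := h2 e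
    refine ⟨d, hd, fun y hy => ?_⟩
    obtain ⟨z, hz, hzp⟩ := he y hy
    obtain ⟨w, hw, hwp⟩ := ha z hzp
    refine ⟨w, ?_, hwp⟩
    rw [h3 y]
    simp only [Nat.unpair_pair]
    exact Part.mem_bind_iff.2 ⟨z, hz, hw⟩
  · -- inflationary
    obtain ⟨u, hu⟩ := exists_curry (fun n => Part.some n.unpair.1)
      (Computable.partrec (Computable.fst.comp Computable.unpair))
    refine ⟨u, fun p x hx => ?_⟩
    obtain ⟨c, hc, h2⟩ := hu x
    refine ⟨c, hc, fun y hy => ?_⟩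
    refine ⟨x, ?_, hx⟩
    rw [h2 y]
    simp [Part.mem_some_iff]
  · -- idempotent
    obtain ⟨u, hu⟩ := exists_curry
      (fun n => (ap n.unpair.1 n.unpair.2).bind fun z => ap z n.unpair.2)
      ((ap_partrec.comp (Computable.fst.comp Computable.unpair)
          (Computable.snd.comp Computable.unpair)).bind
        (ap_partrec.comp Computable.snd
          (Computable.snd.comp (Computable.unpair.comp Computable.fst))))
    refine ⟨u, fun p c hc => ?_⟩
    obtain ⟨d, hd, h2⟩ := hu c
    refine ⟨d, hd, fun y hy => ?_⟩
    obtain ⟨z, hz, hz2⟩ := hc y hy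
    obtain ⟨w, hw, hwp⟩ := hz2 y hy
    refine ⟨w, ?_, hwp⟩
    rw [h2 y]
    simp only [Nat.unpair_pair]
    exact Part.mem_bind_iff.2 ⟨z, hz, hw⟩

private lemma medred_iff' (P Q : Set ℕ) : MedRed P Q ↔ rRed (jq P) (jq Q) := by
  constructor
  · rintro ⟨e0, hdom, hsub⟩
    obtain ⟨u, hu⟩ := exists_curry
      (fun n => (ap e0 n.unpair.2).bind fun w => ap n.unpair.1 w)
      ((ap_partrec.comp (Computable.const e0) (Computable.snd.comp Computable.unpair)).bind
        (ap_partrec.comp (Computable.fst.comp (Computable.unpair.comp Computable.fst))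
          Computable.snd))
    refine ⟨u, fun p c hc => ?_⟩
    obtain ⟨d, hd, h2⟩ := hu c
    refine ⟨d, hd, fun y hy => ?_⟩
    have hw : (ap e0 y).get (hdom y hy) ∈ ap e0 y := Part.get_mem _
    have hwP : (ap e0 y).get (hdom y hy) ∈ P := hsub ⟨y, hy, hw⟩
    obtain ⟨v, hv, hvp⟩ := hc _ hwP
    refine ⟨v, ?_, hvp⟩
    rw [h2 y]
    simp only [Nat.unpair_pair]
    exact Part.mem_bind_iff.2 ⟨_, hw, hv⟩
  · rintro ⟨r, hr⟩
    obtain ⟨ci, hci⟩ := exists_code.1 (Partrec.nat_iff.1 (Computable.partrec Computable.id))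
    have hi : Encodable.encode ci ∈ jq P P := fun x hx => by
      refine ⟨x, ?_, hx⟩
      rw [ap_encode, hci]
      simp [Part.mem_some_iff]
    obtain ⟨z, hz, hzQ⟩ := hr P (Encodable.encode ci) hi
    refine ⟨z, fun a ha => ?_, fun w hw => ?_⟩
    · obtain ⟨v, hv, _⟩ := hzQ a ha
      exact Part.dom_iff_mem.2 ⟨v, hv⟩
    · obtain ⟨a, ha, hwa⟩ := hw
      obtain ⟨v, hv, hvP⟩ := hzQ a ha
      rwa [Part.mem_unique hwa hv]

end Aux

/-- each `j^q` is a Lawvere–Tierney topology, `j^q = j_{Med_q}`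
(equivalently `U_{j^q} = Med_q`), and `P ≤_M Q ↔ j^P ≤_r j^Q`.  Hence `Q ↦ j^Q`
induces an isomorphism between the Medvedev degrees and the r-degrees of the open
topologies. -/
theorem medvedev_open_topologies :
    (∀ q : Set ℕ, LawvereTierney (jq q) ∧ jq q = jU (Med q) ∧ Uop (jq q) = Med q) ∧
    (∀ P Q : Set ℕ, MedRed P Q ↔ rRed (jq P) (jq Q)) :=
  ⟨fun q => ⟨lt_jq' q, jq_eq_jU' q, uop_jq' q⟩, medred_iff'⟩

end KleeneOracle
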